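/- Let G be an n-vertex graph and M a positive semidefinite matrix indexed by V(G) such that (M)_{ij} ≤ 0 for nonadjacent distinct i, j, M has constant row sum r > 0, and every diagonal entry of M equals t. Then α(G) ≤ nt/r, with equality if and only if G has an independent set C with M[C] diagonal and Σ_{u∈C} (M)_{vu} = t for every v ∉ C. -/

import Mathlib

open scoped Classical
open Matrix Finset

/-- The independence number of a finite simple graph. -/
noncomputable def indepNum {V : Type*} [Fintype V] (G : SimpleGraph V) : ℕ :=
  sSup {k | ∃ S : Finset V, (∀ u ∈ S, ∀ v ∈ S, u ≠ v → ¬ G.Adj u v) ∧ S.card = k}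

private lemma gnKey {n : ℕ} {M : Matrix (Fin n) (Fin n) ℝ} {r : ℝ}
    (hM : M.PosSemidef)
    (hrs : ∀ v, ∑ u, M v u = r)
    (hcs : ∀ u, ∑ v, M v u = r)
    (C : Finset (Fin n)) :
    0 ≤ (n : ℝ) * ((n : ℝ) * (∑ v ∈ C, ∑ u ∈ C, M v u) - (C.card : ℝ)^2 * r) ∧
    ((n : ℝ) * ((n : ℝ) * (∑ v ∈ C, ∑ u ∈ C, M v u) - (C.card : ℝ)^2 * r) = 0 →
      ∀ v, (n:ℝ) * (∑ u ∈ C, M v u) = (C.card : ℝ) * r) := by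
  set c : ℝ := (C.card : ℝ) with hc
  set z : Fin n → ℝ := fun v => if v ∈ C then (n : ℝ) - c else -c with hzdef
  have hsumz : ∑ v, z v = 0 := by
    rw [← Finset.sum_add_sum_compl C]
    have h1 : ∀ v ∈ C, z v = (n:ℝ) - c := fun v hv => by simp [hzdef, hv]
    have h2 : ∀ v ∈ Cᶜ, z v = -c := fun v hv => by
      simp [hzdef, (Finset.mem_compl.mp hv)]
    rw [Finset.sum_congr rfl h1, Finset.sum_congr rfl h2, Finset.sum_const,
      Finset.sum_const, Finset.card_compl]
    have hcard : C.card ≤ n := by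
      simpa using Finset.card_le_univ C
    simp only [Fintype.card_fin, hc, nsmul_eq_mul, Nat.cast_sub hcard]
    ring
  have hmz : M.mulVec z = fun v => (n:ℝ) * (∑ u ∈ C, M v u) - c * r := by
    funext v
    simp only [Matrix.mulVec, dotProduct]
    have h1 : ∀ u, M v u * z u = (if u ∈ C then M v u * (n:ℝ) else 0) - M v u * c := by
      intro u
      by_cases h : u ∈ C <;> simp [hzdef, h] <;> ring
    rw [Finset.sum_congr rfl (fun u _ => h1 u), Finset.sum_sub_distrib,
      Finset.sum_ite_mem, Finset.univ_inter, ← Finset.sum_mul, ← Finset.sum_mul, hrs v]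
    ring
  have hfv : ∑ v, (∑ u ∈ C, M v u) = c * r := by
    rw [show ∑ v, ∑ u ∈ C, M v u = ∑ u ∈ C, ∑ v, M v u from Finset.sum_comm]
    rw [Finset.sum_congr rfl (fun u _ => hcs u), Finset.sum_const]
    simp [hc, mul_comm]
  have hQ : z ⬝ᵥ (M.mulVec z) =
      (n:ℝ) * ((n:ℝ) * (∑ v ∈ C, ∑ u ∈ C, M v u) - c^2 * r) := by
    rw [hmz]
    simp only [dotProduct]
    have h1 : ∀ v, z v * ((n:ℝ) * (∑ u ∈ C, M v u) - c * r)
        = (n:ℝ) * (z v * (∑ u ∈ C, M v u)) - (c*r) * z v := by intro v; ring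
    rw [Finset.sum_congr rfl (fun v _ => h1 v), Finset.sum_sub_distrib,
      ← Finset.mul_sum, ← Finset.mul_sum, hsumz, mul_zero, sub_zero]
    have h2 : ∀ v, z v * (∑ u ∈ C, M v u) =
        (if v ∈ C then (n:ℝ) * (∑ u ∈ C, M v u) else 0) - c * (∑ u ∈ C, M v u) := by
      intro v
      by_cases h : v ∈ C <;> simp [hzdef, h] <;> ring
    rw [Finset.sum_congr rfl (fun v _ => h2 v), Finset.sum_sub_distrib,
      Finset.sum_ite_mem, Finset.univ_inter, ← Finset.mul_sum, ← Finset.mul_sum, hfv]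
    ring
  have hstar : star z = z := by
    funext v; simp
  constructor
  · have := hM.dotProduct_mulVec_nonneg z
    rw [hstar, hQ] at this
    exact this
  · intro h0 v
    have hzero : star z ⬝ᵥ M.mulVec z = 0 := by rw [hstar, hQ, h0]
    have hmz0 := (hM.dotProduct_mulVec_zero_iff z).mp hzero
    have := congrFun hmz0 v
    rw [hmz] at this
    simp only [Pi.zero_apply] at this
    linarith

private lemma indepNum_bddAbove {n : ℕ} (G : SimpleGraph (Fin n)) :
    BddAbove {k | ∃ S : Finset (Fin n),
      (∀ u ∈ S, ∀ v ∈ S, u ≠ v → ¬ G.Adj u v) ∧ S.card = k} := by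
  refine ⟨n, fun k hk => ?_⟩
  obtain ⟨S, _, rfl⟩ := hk
  simpa using Finset.card_le_univ S

private lemma indepNum_le_of_indep {n : ℕ} (G : SimpleGraph (Fin n))
    (S : Finset (Fin n)) (hS : ∀ u ∈ S, ∀ v ∈ S, u ≠ v → ¬ G.Adj u v) :
    S.card ≤ indepNum G :=
  le_csSup (indepNum_bddAbove G) ⟨S, hS, rfl⟩

private lemma indepNum_exists {n : ℕ} (G : SimpleGraph (Fin n)) :
    ∃ S : Finset (Fin n),
      (∀ u ∈ S, ∀ v ∈ S, u ≠ v → ¬ G.Adj u v) ∧ S.card = indepNum G := by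
  have hne : {k | ∃ S : Finset (Fin n),
      (∀ u ∈ S, ∀ v ∈ S, u ≠ v → ¬ G.Adj u v) ∧ S.card = k}.Nonempty :=
    ⟨0, ∅, by simp, by simp⟩
  exact Nat.sSup_mem hne (indepNum_bddAbove G)

/-- Corollary 6.5 (Godsil–Newman): if M is PSD, M_{ij} ≤ 0 for nonadjacent distinct i,j,
M has constant row sum r > 0 and constant diagonal t, then α(G) ≤ nt/r, with equality
iff there is an independent set C with M[C] diagonal and Σ_{u∈C} M_{vu} = t for all
v ∉ C. -/
theorem stmt14 (n : ℕ) (G : SimpleGraph (Fin n)) (M : Matrix (Fin n) (Fin n) ℝ)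
    (hM : M.PosSemidef)
    (hnonadj : ∀ i j : Fin n, i ≠ j → ¬ G.Adj i j → M i j ≤ 0)
    (r : ℝ) (hr : 0 < r) (hrow : M.mulVec (fun _ => (1 : ℝ)) = r • (fun _ => (1 : ℝ)))
    (t : ℝ) (hdiag : ∀ i, M i i = t) :
    (indepNum G : ℝ) ≤ n * t / r ∧
      ((indepNum G : ℝ) = n * t / r ↔
        ∃ C : Finset (Fin n), (∀ u ∈ C, ∀ v ∈ C, u ≠ v → ¬ G.Adj u v) ∧
          (∀ u ∈ C, ∀ v ∈ C, u ≠ v → M u v = 0) ∧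
          ∀ v ∉ C, ∑ u ∈ C, M v u = t) := by
  -- row and column sums
  have hrs : ∀ v, ∑ u, M v u = r := by
    intro v
    have := congrFun hrow v
    simpa [Matrix.mulVec, dotProduct] using this
  have hsym : ∀ u v, M u v = M v u := by
    intro u v
    have := congrFun (congrFun hM.1 u) v
    simpa [Matrix.conjTranspose_apply] using this.symm
  have hcs : ∀ u, ∑ v, M v u = r := by
    intro u
    calc ∑ v, M v u = ∑ v, M u v := Finset.sum_congr rfl (fun v _ => (hsym v u))
    _ = r := hrs u
  -- the quadratic form bound for independent sets
  -- splitting the C×C sum into diagonal and off-diagonal parts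
  have hsplit : ∀ C : Finset (Fin n),
      ∑ v ∈ C, ∑ u ∈ C, M v u
        = (C.card : ℝ) * t + ∑ v ∈ C, ∑ u ∈ C.erase v, M v u := by
    intro C
    have h1 : ∀ v ∈ C, ∑ u ∈ C, M v u = t + ∑ u ∈ C.erase v, M v u := by
      intro v hv
      rw [← Finset.add_sum_erase C _ hv, hdiag v]
    rw [Finset.sum_congr rfl h1, Finset.sum_add_distrib, Finset.sum_const]
    simp [mul_comm]
  have hoffdiag_nonpos : ∀ C : Finset (Fin n),
      (∀ u ∈ C, ∀ v ∈ C, u ≠ v → ¬ G.Adj u v) →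
      ∀ v ∈ C, ∀ u ∈ C.erase v, M v u ≤ 0 := by
    intro C hind v hv u hu
    have huC := Finset.mem_of_mem_erase hu
    have hne : u ≠ v := Finset.ne_of_mem_erase hu
    exact hnonadj v u hne.symm (hind v hv u huC hne.symm)
  -- main bound: for nonempty independent C, r * |C| ≤ n * t
  have hbound : ∀ C : Finset (Fin n), (∀ u ∈ C, ∀ v ∈ C, u ≠ v → ¬ G.Adj u v) →
      0 < C.card → r * (C.card : ℝ) ≤ (n : ℝ) * t := by
    intro C hind hpos
    obtain ⟨hQ0, _⟩ := gnKey hM hrs hcs C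
    have hE : ∑ v ∈ C, ∑ u ∈ C.erase v, M v u ≤ 0 :=
      Finset.sum_nonpos (fun v hv =>
        Finset.sum_nonpos (fun u hu => hoffdiag_nonpos C hind v hv u hu))
    have hS1 : ∑ v ∈ C, ∑ u ∈ C, M v u ≤ (C.card : ℝ) * t := by
      rw [hsplit C]; linarith
    have hn : 0 < (n : ℝ) := by
      have : C.Nonempty := Finset.card_pos.mp hpos
      obtain ⟨v, _⟩ := this
      exact_mod_cast Fin.pos v
    have hc : 0 < (C.card : ℝ) := by exact_mod_cast hpos
    have hX : 0 ≤ (n:ℝ) * (∑ v ∈ C, ∑ u ∈ C, M v u) - (C.card : ℝ)^2 * r := by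
      nlinarith [hQ0, hn]
    have h2 : (n:ℝ) * (∑ v ∈ C, ∑ u ∈ C, M v u) ≤ (n:ℝ) * ((C.card : ℝ) * t) :=
      mul_le_mul_of_nonneg_left hS1 hn.le
    have h3 : (C.card : ℝ) * (r * (C.card : ℝ)) ≤ (C.card : ℝ) * ((n:ℝ) * t) := by
      nlinarith [hX, h2]
    exact le_of_mul_le_mul_left h3 hc
  obtain ⟨S, hSind, hScard⟩ := indepNum_exists G
  -- first part
  have hmain : (indepNum G : ℝ) ≤ n * t / r := by
    rcases Nat.eq_zero_or_pos (indepNum G) with h0 | hpos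
    · rw [h0]
      have hnt : 0 ≤ (n:ℝ) * t := by
        rcases Nat.eq_zero_or_pos n with hn0 | hn0
        · simp [hn0]
        · have : (0:ℝ) ≤ t := by
            have := hdiag ⟨0, hn0⟩
            have h2 := hM.dotProduct_mulVec_nonneg (Pi.single (⟨0, hn0⟩ : Fin n) (1:ℝ))
            have h3 : M ⟨0, hn0⟩ ⟨0, hn0⟩ = star (Pi.single (⟨0, hn0⟩ : Fin n) (1:ℝ)) ⬝ᵥ
                M.mulVec (Pi.single ⟨0, hn0⟩ 1) := by
              simp [Matrix.mulVec, dotProduct, Pi.single_apply]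
            rw [← this, h3]
            exact h2
          positivity
      simp only [Nat.cast_zero]
      positivity
    · have hb := hbound S hSind (hScard ▸ hpos)
      rw [hScard] at hb
      rw [le_div_iff₀ hr]
      linarith
  refine ⟨hmain, ?_, ?_⟩
  · -- forward direction of the iff
    intro heq
    rcases Nat.eq_zero_or_pos n with hn0 | hn0
    · refine ⟨∅, by simp, by simp, fun v _ => ?_⟩
      subst hn0; exact v.elim0
    · -- n > 0, so indepNum ≥ 1
      have hpos : 0 < indepNum G := by
        have := indepNum_le_of_indep G {⟨0, hn0⟩} (by simp)
        exact (by simpa using this : 1 ≤ indepNum G)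
      have hSpos : 0 < S.card := hScard ▸ hpos
      have hceq : r * (S.card : ℝ) = (n : ℝ) * t := by
        have : (S.card : ℝ) = n * t / r := by rw [hScard]; exact heq
        field_simp at this
        linarith
      obtain ⟨hQ0, hQeq⟩ := gnKey hM hrs hcs S
      have hE : ∑ v ∈ S, ∑ u ∈ S.erase v, M v u ≤ 0 :=
        Finset.sum_nonpos (fun v hv =>
          Finset.sum_nonpos (fun u hu => hoffdiag_nonpos S hSind v hv u hu))
      have hS1 : ∑ v ∈ S, ∑ u ∈ S, M v u ≤ (S.card : ℝ) * t := by
        rw [hsplit S]; linarith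
      have hnpos : 0 < (n : ℝ) := by exact_mod_cast hn0
      have hcpos : 0 < (S.card : ℝ) := by exact_mod_cast hSpos
      -- n*S1 ≤ n * c * t = c * (n*t) = c * (r*c) = c^2 * r, so Q ≤ 0, hence Q = 0
      have hcr : (S.card : ℝ)^2 * r = (S.card : ℝ) * ((n:ℝ) * t) := by
        rw [← hceq]; ring
      have hX : (n:ℝ) * (∑ v ∈ S, ∑ u ∈ S, M v u) - (S.card : ℝ)^2 * r ≤ 0 := by
        nlinarith [mul_le_mul_of_nonneg_left hS1 hnpos.le, hcr]
      have hQle : (n : ℝ) * ((n : ℝ) * (∑ v ∈ S, ∑ u ∈ S, M v u) - (S.card : ℝ)^2 * r) ≤ 0 :=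
        mul_nonpos_iff.mpr (Or.inl ⟨hnpos.le, hX⟩)
      have hQz : (n : ℝ) * ((n : ℝ) * (∑ v ∈ S, ∑ u ∈ S, M v u) - (S.card : ℝ)^2 * r) = 0 :=
        le_antisymm hQle hQ0
      -- hence S1 = c*t exactly, so E = 0
      have hS1eq : ∑ v ∈ S, ∑ u ∈ S, M v u = (S.card : ℝ) * t := by
        have h1 : (n : ℝ) * (∑ v ∈ S, ∑ u ∈ S, M v u) = (S.card : ℝ)^2 * r := by
          have := mul_eq_zero.mp hQz
          rcases this with h | h
          · exact absurd h (ne_of_gt hnpos)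
          · linarith
        have h2 : (S.card : ℝ)^2 * r = (S.card : ℝ) * ((n:ℝ) * t) := by
          rw [← hceq]; ring
        have h3 : (n : ℝ) * (∑ v ∈ S, ∑ u ∈ S, M v u) = (n:ℝ) * ((S.card : ℝ) * t) := by
          rw [h1, h2]; ring
        exact mul_left_cancel₀ (ne_of_gt hnpos) h3
      have hEz : ∑ v ∈ S, ∑ u ∈ S.erase v, M v u = 0 := by
        have := hsplit S
        rw [hS1eq] at this
        linarith
      -- each off-diagonal entry is zero
      have hzero : ∀ v ∈ S, ∀ u ∈ S.erase v, M v u = 0 := by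
        have h1 := (Finset.sum_eq_zero_iff_of_nonpos
          (fun v hv => Finset.sum_nonpos
            (fun u hu => hoffdiag_nonpos S hSind v hv u hu))).mp hEz
        intro v hv u hu
        exact (Finset.sum_eq_zero_iff_of_nonpos
          (fun u hu => hoffdiag_nonpos S hSind v hv u hu)).mp (h1 v hv) u hu
      -- column sums over S are t
      have hcol : ∀ v, ∑ u ∈ S, M v u = t := by
        intro v
        have := hQeq hQz v
        have h2 : (S.card : ℝ) * r = (n:ℝ) * t := by linarith [hceq]
        rw [h2] at this
        exact mul_left_cancel₀ (ne_of_gt hnpos) this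
      refine ⟨S, hSind, ?_, fun v _ => hcol v⟩
      intro u hu v hv hne
      exact hzero u hu v (Finset.mem_erase.mpr ⟨hne.symm, hv⟩)
  · -- reverse direction of the iff
    rintro ⟨C, hCind, hCdiag, hCcol⟩
    -- compute: r * |C| = n * t
    have hkey : r * (C.card : ℝ) = (n : ℝ) * t := by
      have h1 : ∑ u ∈ C, ∑ v, M v u = (C.card : ℝ) * r := by
        rw [Finset.sum_congr rfl (fun u _ => hcs u), Finset.sum_const]
        simp [mul_comm]
      have h2 : ∑ u ∈ C, ∑ v, M v u = ∑ v, ∑ u ∈ C, M v u := Finset.sum_comm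
      have h3 : ∀ v, ∑ u ∈ C, M v u = t := by
        intro v
        by_cases hv : v ∈ C
        · rw [← Finset.add_sum_erase C _ hv, hdiag v]
          have : ∑ u ∈ C.erase v, M v u = 0 :=
            Finset.sum_eq_zero (fun u hu =>
              hCdiag v hv u (Finset.mem_of_mem_erase hu) (Finset.ne_of_mem_erase hu).symm)
          rw [this, add_zero]
        · exact hCcol v hv
      have h4 : ∑ v : Fin n, ∑ u ∈ C, M v u = (n : ℝ) * t := by
        rw [Finset.sum_congr rfl (fun v _ => h3 v), Finset.sum_const]
        simp [mul_comm]
      rw [h2, h4] at h1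
      linarith
    have hcval : (C.card : ℝ) = (n : ℝ) * t / r := by
      field_simp
      linarith
    have hle : (C.card : ℝ) ≤ (indepNum G : ℝ) := by
      exact_mod_cast indepNum_le_of_indep G C hCind
    have : (indepNum G : ℝ) ≤ (C.card : ℝ) := hcval ▸ hmain
    linarith [hcval ▸ le_antisymm this hle]
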